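/- arXiv:1812.06809 — 2 statements merged into one kernel-verified Lean document; each statement's English description precedes it below -/
import Mathlib

section
/- Consider the closed-loop regulation system H(q)q̈ + C(q,q̇)q̇ = -K_P q̃ - K_D ϑ, ϑ̇ = -Lϑ + B q̇, where q̃ = q - q_d with q_d constant, H(q) is symmetric positive definite, Ḣ - 2C is skew-symmetric, and K_P, K_D, L, B are symmetric positive definite with K_D B^{-1} symmetric. Then the function V(q̇, q̃, ϑ) = ½ q̇ᵀH(q)q̇ + ½ q̃ᵀK_P q̃ + ½ ϑᵀ K_D B^{-1} ϑ satisfies V̇ = -ϑᵀ(K_D B^{-1} L)ϑ ≤ 0 along trajectories, provided K_D B^{-1} L is positive semidefinite. -/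
open Matrix

lemma dot_symm' {n : ℕ} (A : Matrix (Fin n) (Fin n) ℝ) (hA : A.transpose = A)
    (x y : Fin n → ℝ) : x ⬝ᵥ A.mulVec y = y ⬝ᵥ A.mulVec x := by
  simp only [dotProduct, Matrix.mulVec, Finset.mul_sum]
  rw [Finset.sum_comm]
  refine Finset.sum_congr rfl fun i _ => Finset.sum_congr rfl fun j _ => ?_
  have h := congrFun (congrFun hA i) j
  simp only [Matrix.transpose_apply] at h
  rw [← h]; ring

lemma dot_skew' {n : ℕ} (S : Matrix (Fin n) (Fin n) ℝ) (hS : S.transpose = -S)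
    (x : Fin n → ℝ) : x ⬝ᵥ S.mulVec x = 0 := by
  have h1 : x ⬝ᵥ S.transpose.mulVec x = x ⬝ᵥ S.mulVec x := by
    simp only [dotProduct, Matrix.mulVec, Finset.mul_sum]
    rw [Finset.sum_comm]
    refine Finset.sum_congr rfl fun i _ => Finset.sum_congr rfl fun j _ => ?_
    simp only [dotProduct, Matrix.transpose_apply]; ring
  rw [hS] at h1
  simp only [Matrix.neg_mulVec, dotProduct_neg] at h1
  linarith

lemma hasDerivAt_quadForm {n : ℕ} (x y : ℝ → Fin n → ℝ)
    (A : ℝ → Matrix (Fin n) (Fin n) ℝ)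
    (x' y' : Fin n → ℝ) (A' : Matrix (Fin n) (Fin n) ℝ) (t : ℝ)
    (hx : ∀ i, HasDerivAt (fun s => x s i) (x' i) t)
    (hy : ∀ i, HasDerivAt (fun s => y s i) (y' i) t)
    (hA : ∀ i j, HasDerivAt (fun s => A s i j) (A' i j) t) :
    HasDerivAt (fun s => x s ⬝ᵥ (A s).mulVec (y s))
      (x' ⬝ᵥ (A t).mulVec (y t) + x t ⬝ᵥ A'.mulVec (y t) + x t ⬝ᵥ (A t).mulVec y') t := by
  have hfun : (fun s => x s ⬝ᵥ (A s).mulVec (y s))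
      = fun s => ∑ i, ∑ j, x s i * A s i j * y s j := by
    funext s
    simp only [dotProduct, Matrix.mulVec, Finset.mul_sum, mul_assoc]
  have key : HasDerivAt (fun s => ∑ i, ∑ j, x s i * A s i j * y s j)
      (∑ i, ∑ j, ((x' i * A t i j + x t i * A' i j) * y t j + x t i * A t i j * y' j)) t := by
    apply HasDerivAt.fun_sum; intro i _; apply HasDerivAt.fun_sum; intro j _
    exact ((hx i).mul (hA i j)).mul (hy j)
  rw [hfun]
  convert key using 1
  simp only [dotProduct, Matrix.mulVec, Finset.mul_sum, ← Finset.sum_add_distrib]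
  refine Finset.sum_congr rfl fun i _ => ?_
  refine Finset.sum_congr rfl fun j _ => ?_
  ring

/-- Lyapunov derivative for the dirty-derivative regulator R2: along trajectories of the
closed loop `H(q)q̈ + C(q,q̇)q̇ = -K_P q̃ - K_D ϑ`, `ϑ̇ = -Lϑ + Bq̇`, the function
`V = ½ q̇ᵀHq̇ + ½ q̃ᵀK_P q̃ + ½ ϑᵀK_D B⁻¹ ϑ` satisfies
`V̇ = -ϑᵀ(K_D B⁻¹ L)ϑ ≤ 0`. -/
theorem lyapunov_derivative_R2 {n : ℕ}
    (H : (Fin n → ℝ) → Matrix (Fin n) (Fin n) ℝ)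
    (C : (Fin n → ℝ) → (Fin n → ℝ) → Matrix (Fin n) (Fin n) ℝ)
    (KP KD L B : Matrix (Fin n) (Fin n) ℝ)
    (q ϑ : ℝ → Fin n → ℝ) (qd : Fin n → ℝ)
    (hHsymm : ∀ p, (H p).transpose = H p)
    (hHpd : ∀ p, (H p).PosDef)
    (hKP : KP.PosDef) (hKPs : KP.transpose = KP)
    (hKD : KD.PosDef) (hKDs : KD.transpose = KD)
    (hL : L.PosDef) (hLs : L.transpose = L)
    (hB : B.PosDef) (hBs : B.transpose = B)
    (hKDBsymm : (KD * B⁻¹).transpose = KD * B⁻¹)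
    (hQpsd : (KD * B⁻¹ * L).PosSemidef)
    (hq : Differentiable ℝ q) (hq' : Differentiable ℝ (deriv q))
    (hϑ : Differentiable ℝ ϑ)
    (hHq : ∀ i j, Differentiable ℝ (fun t => H (q t) i j))
    (hskew : ∀ t,
      ((Matrix.of fun i j => deriv (fun s => H (q s) i j) t) - (2 : ℝ) • C (q t) (deriv q t)).transpose
        = -((Matrix.of fun i j => deriv (fun s => H (q s) i j) t) - (2 : ℝ) • C (q t) (deriv q t)))
    (hdyn : ∀ t, (H (q t)).mulVec (deriv (deriv q) t)
        + (C (q t) (deriv q t)).mulVec (deriv q t)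
        = -(KP.mulVec (q t - qd)) - KD.mulVec (ϑ t))
    (hfilter : ∀ t, deriv ϑ t = -(L.mulVec (ϑ t)) + B.mulVec (deriv q t)) :
    ∀ t : ℝ,
      deriv (fun s =>
          (1 / 2 : ℝ) * (deriv q s ⬝ᵥ (H (q s)).mulVec (deriv q s))
          + (1 / 2 : ℝ) * ((q s - qd) ⬝ᵥ KP.mulVec (q s - qd))
          + (1 / 2 : ℝ) * (ϑ s ⬝ᵥ (KD * B⁻¹).mulVec (ϑ s))) t
        = -(ϑ t ⬝ᵥ (KD * B⁻¹ * L).mulVec (ϑ t)) ∧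
      deriv (fun s =>
          (1 / 2 : ℝ) * (deriv q s ⬝ᵥ (H (q s)).mulVec (deriv q s))
          + (1 / 2 : ℝ) * ((q s - qd) ⬝ᵥ KP.mulVec (q s - qd))
          + (1 / 2 : ℝ) * (ϑ s ⬝ᵥ (KD * B⁻¹).mulVec (ϑ s))) t ≤ 0 := by

  intro t
  set q' : Fin n → ℝ := deriv q t with hq'def
  set q'' : Fin n → ℝ := deriv (deriv q) t with hq''def
  set ϑ' : Fin n → ℝ := deriv ϑ t with hϑ'def
  set M : Matrix (Fin n) (Fin n) ℝ := KD * B⁻¹ with hMdef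
  set Hd : Matrix (Fin n) (Fin n) ℝ :=
    Matrix.of (fun i j => deriv (fun s => H (q s) i j) t) with hHddef
  -- componentwise derivatives
  have hqc : ∀ i, HasDerivAt (fun s => q s i) (q' i) t :=
    hasDerivAt_pi.mp (hq t).hasDerivAt
  have hq'c : ∀ i, HasDerivAt (fun s => deriv q s i) (q'' i) t :=
    hasDerivAt_pi.mp (hq' t).hasDerivAt
  have hϑc : ∀ i, HasDerivAt (fun s => ϑ s i) (ϑ' i) t :=
    hasDerivAt_pi.mp (hϑ t).hasDerivAt
  have hHc : ∀ i j, HasDerivAt (fun s => H (q s) i j) (Hd i j) t :=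
    fun i j => ((hHq i j) t).hasDerivAt
  have hqtc : ∀ i, HasDerivAt (fun s => (q s - qd) i) (q' i) t := by
    intro i
    simpa using (hqc i).sub_const (qd i)
  have T1 : HasDerivAt (fun s => deriv q s ⬝ᵥ (H (q s)).mulVec (deriv q s))
      (q'' ⬝ᵥ (H (q t)).mulVec q' + q' ⬝ᵥ Hd.mulVec q' + q' ⬝ᵥ (H (q t)).mulVec q'') t :=
    hasDerivAt_quadForm (fun s => deriv q s) (fun s => deriv q s) (fun s => H (q s))
      q'' q'' Hd t hq'c hq'c hHc
  have T2 : HasDerivAt (fun s => (q s - qd) ⬝ᵥ KP.mulVec (q s - qd))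
      (q' ⬝ᵥ KP.mulVec (q t - qd) + (q t - qd) ⬝ᵥ (0 : Matrix (Fin n) (Fin n) ℝ).mulVec (q t - qd)
        + (q t - qd) ⬝ᵥ KP.mulVec q') t :=
    hasDerivAt_quadForm (fun s => q s - qd) (fun s => q s - qd) (fun _ => KP)
      q' q' 0 t hqtc hqtc (fun i j => hasDerivAt_const t (KP i j))
  have T3 : HasDerivAt (fun s => ϑ s ⬝ᵥ M.mulVec (ϑ s))
      (ϑ' ⬝ᵥ M.mulVec (ϑ t) + ϑ t ⬝ᵥ (0 : Matrix (Fin n) (Fin n) ℝ).mulVec (ϑ t)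
        + ϑ t ⬝ᵥ M.mulVec ϑ') t :=
    hasDerivAt_quadForm ϑ ϑ (fun _ => M) ϑ' ϑ' 0 t hϑc hϑc
      (fun i j => hasDerivAt_const t (M i j))
  have TV := ((T1.const_mul (1/2 : ℝ)).fun_add (T2.const_mul (1/2 : ℝ))).fun_add
    (T3.const_mul (1/2 : ℝ))
  have hderiv := TV.deriv
  -- now compute the value
  have hBinv : B⁻¹ * B = 1 :=
    Matrix.nonsing_inv_mul B (isUnit_iff_ne_zero.mpr hB.det_pos.ne')
  have hMB : M * B = KD := by
    rw [hMdef, mul_assoc, hBinv, mul_one]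
  -- symmetry rewrites
  have s1 : q'' ⬝ᵥ (H (q t)).mulVec q' = q' ⬝ᵥ (H (q t)).mulVec q'' :=
    dot_symm' _ (hHsymm (q t)) _ _
  have s2 : (q t - qd) ⬝ᵥ KP.mulVec q' = q' ⬝ᵥ KP.mulVec (q t - qd) :=
    dot_symm' _ hKPs _ _
  have s3 : ϑ' ⬝ᵥ M.mulVec (ϑ t) = ϑ t ⬝ᵥ M.mulVec ϑ' :=
    dot_symm' _ hKDBsymm _ _
  -- dynamics
  have hHq'' : (H (q t)).mulVec q'' =
      -(KP.mulVec (q t - qd)) - KD.mulVec (ϑ t) - (C (q t) q').mulVec q' := by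
    have := hdyn t
    rw [hq''def, hq'def]
    rw [← hq''def, ← hq'def] at this ⊢
    linear_combination this
  have e1 : q' ⬝ᵥ (H (q t)).mulVec q'' =
      -(q' ⬝ᵥ KP.mulVec (q t - qd)) - q' ⬝ᵥ KD.mulVec (ϑ t)
        - q' ⬝ᵥ (C (q t) q').mulVec q' := by
    rw [hHq'']
    simp [dotProduct_sub, dotProduct_neg]
  -- skew symmetry
  have e2 : q' ⬝ᵥ Hd.mulVec q' = 2 * (q' ⬝ᵥ (C (q t) q').mulVec q') := by
    have h0 := dot_skew' _ (hskew t) q'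
    rw [← hq'def, ← hHddef] at h0
    rw [Matrix.sub_mulVec, dotProduct_sub, Matrix.smul_mulVec,
      dotProduct_smul] at h0
    simp only [smul_eq_mul] at h0
    linarith
  -- filter
  have e3 : ϑ t ⬝ᵥ M.mulVec ϑ' =
      -(ϑ t ⬝ᵥ (KD * B⁻¹ * L).mulVec (ϑ t)) + q' ⬝ᵥ KD.mulVec (ϑ t) := by
    have hf := hfilter t
    rw [← hϑ'def] at hf
    rw [hf, Matrix.mulVec_add, dotProduct_add, Matrix.mulVec_neg, dotProduct_neg,
      Matrix.mulVec_mulVec, Matrix.mulVec_mulVec, hMB, ← hq'def, ← hMdef]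
    congr 1
    exact dot_symm' _ hKDs _ _
  constructor
  · rw [hderiv]
    rw [s1, s2, s3, e1, e2, e3]
    simp only [Matrix.zero_mulVec, dotProduct_zero]
    ring
  · rw [hderiv, s1, s2, s3, e1, e2, e3]
    simp only [Matrix.zero_mulVec, dotProduct_zero]
    have hpsd : 0 ≤ ϑ t ⬝ᵥ (KD * B⁻¹ * L).mulVec (ϑ t) := by
      have := hQpsd.dotProduct_mulVec_nonneg (ϑ t); simpa using this
    nlinarith
end

section
/- Let α₁, α₂, α₃ ∈ ℝ and define α₁₂ = max(|α₁|, |α₂|). Suppose a 3×3 matrix C(q, v) (v = (v₁,v₂,v₃)) has entries satisfying |C₁₁| ≤ (|v₂|(2|α₁|+4|α₃|) + |v₃|(2|α₂|+4|α₃|))/8, |C₁₂| ≤ |v₁|(|α₁|+4|α₃|)/8, |C₁₃| ≤ |v₁|(|α₂|+4|α₃|)/8, |C₂₁| ≤ |v₁|(|α₁|+4|α₃|)/8, |C₂₃| ≤ |v₃||α₃|/2, |C₃₁| ≤ |v₁|(|α₂|+4|α₃|)/8, |C₃₂| ≤ |v₂||α₃|/2, and C₂₂ = C₃₃ = 0.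 Then the induced 1-norm satisfies ‖C(q,v)‖₁ ≤ (¼|α₁₂| + |α₃|)·√3·‖v‖₂, and hence ‖C(q,v)‖₂ ≤ 3(¼|α₁₂| + |α₃|)‖v‖₂. -/
open Matrix

/-- Euclidean norm of a vector in `ℝ^n`. -/
noncomputable def euclidEnorm {n : ℕ} (x : Fin n → ℝ) : ℝ := Real.sqrt (x ⬝ᵥ x)

lemma abs_sum_le_sqrt3 (a b c : ℝ) :
    |a| + |b| + |c| ≤ Real.sqrt 3 * Real.sqrt (a * a + b * b + c * c) := by
  rw [← Real.sqrt_mul (by norm_num)]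
  rw [Real.le_sqrt (by positivity)
    (by nlinarith [mul_self_nonneg a, mul_self_nonneg b, mul_self_nonneg c])]
  nlinarith [sq_abs a, sq_abs b, sq_abs c, abs_nonneg a, abs_nonneg b, abs_nonneg c,
    sq_nonneg (|a| - |b|), sq_nonneg (|a| - |c|), sq_nonneg (|b| - |c|)]

lemma abs_le_sqrt3 (a b c : ℝ) : |a| ≤ Real.sqrt (a * a + b * b + c * c) := by
  rw [Real.le_sqrt (abs_nonneg a)
    (by nlinarith [mul_self_nonneg a, mul_self_nonneg b, mul_self_nonneg c])]
  nlinarith [sq_abs a, sq_nonneg b, sq_nonneg c]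

lemma sqrt_sum_le (a b c B : ℝ) (hB : 0 ≤ B) (ha : |a| ≤ B) (hb : |b| ≤ B) (hc : |c| ≤ B) :
    Real.sqrt (a * a + b * b + c * c) ≤ Real.sqrt 3 * B := by
  have h1 : Real.sqrt (a * a + b * b + c * c) ≤ Real.sqrt (3 * (B * B)) := by
    apply Real.sqrt_le_sqrt
    nlinarith [sq_abs a, sq_abs b, sq_abs c, abs_nonneg a, abs_nonneg b, abs_nonneg c]
  calc Real.sqrt (a * a + b * b + c * c) ≤ Real.sqrt (3 * (B * B)) := h1
    _ = Real.sqrt 3 * B := by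
        rw [Real.sqrt_mul (by norm_num), Real.sqrt_mul_self hB]

/-- Derivation of the Coriolis constant `k_c = 3(¼|α₁₂| + |α₃|)` for the PHANToM robot:
entrywise bounds on the `3×3` Coriolis matrix give the induced 1-norm bound
`‖C‖₁ ≤ (¼|α₁₂|+|α₃|)√3‖v‖₂` and hence the spectral bound
`‖C‖₂ ≤ 3(¼|α₁₂|+|α₃|)‖v‖₂`. -/
theorem phantom_coriolis_bound
    (α₁ α₂ α₃ : ℝ) (C : Matrix (Fin 3) (Fin 3) ℝ) (v : Fin 3 → ℝ)
    (h11 : |C 0 0| ≤ (|v 1| * (2 * |α₁| + 4 * |α₃|) + |v 2| * (2 * |α₂| + 4 * |α₃|)) / 8)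
    (h12 : |C 0 1| ≤ |v 0| * (|α₁| + 4 * |α₃|) / 8)
    (h13 : |C 0 2| ≤ |v 0| * (|α₂| + 4 * |α₃|) / 8)
    (h21 : |C 1 0| ≤ |v 0| * (|α₁| + 4 * |α₃|) / 8)
    (h23 : |C 1 2| ≤ |v 2| * |α₃| / 2)
    (h31 : |C 2 0| ≤ |v 0| * (|α₂| + 4 * |α₃|) / 8)
    (h32 : |C 2 1| ≤ |v 1| * |α₃| / 2)
    (h22 : C 1 1 = 0) (h33 : C 2 2 = 0) :
    (∀ j : Fin 3, ∑ i, |C i j|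
        ≤ ((1 / 4) * max |α₁| |α₂| + |α₃|) * Real.sqrt 3 * euclidEnorm v) ∧
    (∀ y : Fin 3 → ℝ, euclidEnorm (C.mulVec y)
        ≤ 3 * ((1 / 4) * max |α₁| |α₂| + |α₃|) * euclidEnorm v * euclidEnorm y) := by
  set k : ℝ := (1 / 4) * max |α₁| |α₂| + |α₃| with hk
  have hm1 : |α₁| ≤ max |α₁| |α₂| := le_max_left _ _
  have hm2 : |α₂| ≤ max |α₁| |α₂| := le_max_right _ _
  have hknn : 0 ≤ k := by positivity
  have hvsum : |v 0| + |v 1| + |v 2| ≤ Real.sqrt 3 * euclidEnorm v := by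
    have := abs_sum_le_sqrt3 (v 0) (v 1) (v 2)
    simpa [euclidEnorm, dotProduct, Fin.sum_univ_three, mul_add, add_assoc] using this
  have ek : k * (|v 0| + |v 1| + |v 2|)
      = (|v 0| * max |α₁| |α₂| + |v 1| * max |α₁| |α₂| + |v 2| * max |α₁| |α₂|) / 4
        + (|v 0| * |α₃| + |v 1| * |α₃| + |v 2| * |α₃|) := by
    rw [hk]; ring
  have p01 : |v 0| * |α₁| ≤ |v 0| * max |α₁| |α₂| :=
    mul_le_mul_of_nonneg_left hm1 (abs_nonneg _)
  have p02 : |v 0| * |α₂| ≤ |v 0| * max |α₁| |α₂| :=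
    mul_le_mul_of_nonneg_left hm2 (abs_nonneg _)
  have p11 : |v 1| * |α₁| ≤ |v 1| * max |α₁| |α₂| :=
    mul_le_mul_of_nonneg_left hm1 (abs_nonneg _)
  have p12 : |v 1| * |α₂| ≤ |v 1| * max |α₁| |α₂| :=
    mul_le_mul_of_nonneg_left hm2 (abs_nonneg _)
  have p21 : |v 2| * |α₁| ≤ |v 2| * max |α₁| |α₂| :=
    mul_le_mul_of_nonneg_left hm1 (abs_nonneg _)
  have p22 : |v 2| * |α₂| ≤ |v 2| * max |α₁| |α₂| :=
    mul_le_mul_of_nonneg_left hm2 (abs_nonneg _)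
  have q0 : (0:ℝ) ≤ |v 0| * |α₃| := mul_nonneg (abs_nonneg _) (abs_nonneg _)
  have r0 : (0:ℝ) ≤ |v 0| * max |α₁| |α₂| := by positivity
  have r1 : (0:ℝ) ≤ |v 1| * max |α₁| |α₂| := by positivity
  have r2 : (0:ℝ) ≤ |v 2| * max |α₁| |α₂| := by positivity
  have q1 : (0:ℝ) ≤ |v 1| * |α₃| := mul_nonneg (abs_nonneg _) (abs_nonneg _)
  have q2 : (0:ℝ) ≤ |v 2| * |α₃| := mul_nonneg (abs_nonneg _) (abs_nonneg _)
  have hcol0 : |C 0 0| + |C 1 0| + |C 2 0| ≤ k * (|v 0| + |v 1| + |v 2|) := by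
    rw [ek]; linarith
  have hcol1 : |C 0 1| + |C 1 1| + |C 2 1| ≤ k * (|v 0| + |v 1| + |v 2|) := by
    rw [h22, abs_zero, ek]; linarith
  have hcol2 : |C 0 2| + |C 1 2| + |C 2 2| ≤ k * (|v 0| + |v 1| + |v 2|) := by
    rw [h33, abs_zero, ek]; linarith
  have hrow0 : |C 0 0| + |C 0 1| + |C 0 2| ≤ k * (|v 0| + |v 1| + |v 2|) := by
    rw [ek]; linarith
  have hrow1 : |C 1 0| + |C 1 1| + |C 1 2| ≤ k * (|v 0| + |v 1| + |v 2|) := by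
    rw [h22, abs_zero, ek]; linarith
  have hrow2 : |C 2 0| + |C 2 1| + |C 2 2| ≤ k * (|v 0| + |v 1| + |v 2|) := by
    rw [h33, abs_zero, ek]; linarith
  have part1 : ∀ j : Fin 3, ∑ i, |C i j| ≤ k * Real.sqrt 3 * euclidEnorm v := by
    intro j
    have hcol : ∑ i, |C i j| ≤ k * (|v 0| + |v 1| + |v 2|) := by
      fin_cases j <;> rw [Fin.sum_univ_three]
      · exact hcol0
      · exact hcol1
      · exact hcol2
    calc ∑ i, |C i j| ≤ k * (|v 0| + |v 1| + |v 2|) := hcol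
      _ ≤ k * (Real.sqrt 3 * euclidEnorm v) := mul_le_mul_of_nonneg_left hvsum hknn
      _ = k * Real.sqrt 3 * euclidEnorm v := by ring
  refine ⟨part1, ?_⟩
  intro y
  have hy0 : |y 0| ≤ euclidEnorm y := by
    have := abs_le_sqrt3 (y 0) (y 1) (y 2)
    simpa [euclidEnorm, dotProduct, Fin.sum_univ_three, add_assoc] using this
  have hy1 : |y 1| ≤ euclidEnorm y := by
    have h := abs_le_sqrt3 (y 1) (y 0) (y 2)
    have e : y 1 * y 1 + y 0 * y 0 + y 2 * y 2 = y 0 * y 0 + y 1 * y 1 + y 2 * y 2 := by ring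
    rw [e] at h
    simpa [euclidEnorm, dotProduct, Fin.sum_univ_three, add_assoc] using h
  have hy2 : |y 2| ≤ euclidEnorm y := by
    have h := abs_le_sqrt3 (y 2) (y 0) (y 1)
    have e : y 2 * y 2 + y 0 * y 0 + y 1 * y 1 = y 0 * y 0 + y 1 * y 1 + y 2 * y 2 := by ring
    rw [e] at h
    simpa [euclidEnorm, dotProduct, Fin.sum_univ_three, add_assoc] using h
  have heynn : 0 ≤ euclidEnorm y := Real.sqrt_nonneg _
  have hrow : ∀ i : Fin 3, |C.mulVec y i| ≤ k * (|v 0| + |v 1| + |v 2|) * euclidEnorm y := by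
    intro i
    have hmv : C.mulVec y i = C i 0 * y 0 + C i 1 * y 1 + C i 2 * y 2 := by
      simp [Matrix.mulVec, dotProduct, Fin.sum_univ_three]
    have habs : |C.mulVec y i| ≤ |C i 0| * |y 0| + |C i 1| * |y 1| + |C i 2| * |y 2| := by
      rw [hmv]
      simpa [abs_mul] using
        abs_add_three (C i 0 * y 0) (C i 1 * y 1) (C i 2 * y 2)
    have hstep : |C i 0| * |y 0| + |C i 1| * |y 1| + |C i 2| * |y 2|
        ≤ (|C i 0| + |C i 1| + |C i 2|) * euclidEnorm y := by
      have e : (|C i 0| + |C i 1| + |C i 2|) * euclidEnorm y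
          = |C i 0| * euclidEnorm y + |C i 1| * euclidEnorm y + |C i 2| * euclidEnorm y := by ring
      rw [e]
      exact add_le_add (add_le_add
        (mul_le_mul_of_nonneg_left hy0 (abs_nonneg _))
        (mul_le_mul_of_nonneg_left hy1 (abs_nonneg _)))
        (mul_le_mul_of_nonneg_left hy2 (abs_nonneg _))
    have hrowsum : |C i 0| + |C i 1| + |C i 2| ≤ k * (|v 0| + |v 1| + |v 2|) := by
      fin_cases i
      · exact hrow0
      · exact hrow1
      · exact hrow2
    calc |C.mulVec y i| ≤ |C i 0| * |y 0| + |C i 1| * |y 1| + |C i 2| * |y 2| := habs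
      _ ≤ (|C i 0| + |C i 1| + |C i 2|) * euclidEnorm y := hstep
      _ ≤ k * (|v 0| + |v 1| + |v 2|) * euclidEnorm y :=
          mul_le_mul_of_nonneg_right hrowsum heynn
  have hkv : (0:ℝ) ≤ k * (Real.sqrt 3 * euclidEnorm v) := by
    have h0 : (0:ℝ) ≤ |v 0| + |v 1| + |v 2| := by positivity
    exact mul_nonneg hknn (le_trans h0 hvsum)
  have hB : ∀ i : Fin 3, |C.mulVec y i| ≤ k * (Real.sqrt 3 * euclidEnorm v) * euclidEnorm y := by
    intro i
    refine le_trans (hrow i) ?_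
    exact mul_le_mul_of_nonneg_right (mul_le_mul_of_nonneg_left hvsum hknn) heynn
  have hBnn : 0 ≤ k * (Real.sqrt 3 * euclidEnorm v) * euclidEnorm y := mul_nonneg hkv heynn
  have hfinal : euclidEnorm (C.mulVec y)
      ≤ Real.sqrt 3 * (k * (Real.sqrt 3 * euclidEnorm v) * euclidEnorm y) := by
    have h := sqrt_sum_le (C.mulVec y 0) (C.mulVec y 1) (C.mulVec y 2)
      (k * (Real.sqrt 3 * euclidEnorm v) * euclidEnorm y) hBnn (hB 0) (hB 1) (hB 2)
    simpa [euclidEnorm, dotProduct, Fin.sum_univ_three, add_assoc] using h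
  have h3 : Real.sqrt 3 * Real.sqrt 3 = 3 := Real.mul_self_sqrt (by norm_num)
  calc euclidEnorm (C.mulVec y) ≤ Real.sqrt 3 * (k * (Real.sqrt 3 * euclidEnorm v) * euclidEnorm y) := hfinal
    _ = (Real.sqrt 3 * Real.sqrt 3) * k * euclidEnorm v * euclidEnorm y := by ring
    _ = 3 * k * euclidEnorm v * euclidEnorm y := by rw [h3]
end
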